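/- Let R'' = F_2[X1,X2,X3][(X1+X2)^{-1},(X1+X3)^{-1},(X2+X3)^{-1}] and let R̃'' be the analogous ring in square-root variables, i.e. F_2[Y1,Y2,Y3][(Y1+Y2)^{-1},(Y1+Y3)^{-1},(Y2+Y3)^{-1}] with X_i = Y_i^2. Then R̃'' is a free R''-module of rank 8 with basis {Y1^{ε1} Y2^{ε2} Y3^{ε3} : ε_i ∈ {0,1}}. -/

import Mathlib

noncomputable section
open MvPolynomial

abbrev RY : Type := MvPolynomial (Fin 3) (ZMod 2)
abbrev L : Type := FractionRing RY

/-- The square-root variable `Y_i`. -/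
def y (i : Fin 3) : L := algebraMap RY L (X i)

/-- `R̃'' = F₂[Y1,Y2,Y3][(Y1+Y2)⁻¹,(Y1+Y3)⁻¹,(Y2+Y3)⁻¹]`. -/
instance : CharP L 2 := charP_of_injective_algebraMap (IsFractionRing.injective RY L) 2

lemma y_ne {i j : Fin 3} (h : i ≠ j) : y i ≠ y j :=
  fun h' => h (X_injective (IsFractionRing.injective RY L h'))

lemma y_add_ne {i j : Fin 3} (h : i ≠ j) : y i + y j ≠ 0 := by
  intro h0
  exact y_ne h (by rwa [CharTwo.add_eq_iff_eq_add, zero_add] at h0)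

def E (ε : Fin 3 → Fin 2) : Fin 3 →₀ ℕ := Finsupp.equivFunOnFinite.symm fun i => (ε i : ℕ)

@[simp] lemma E_apply (ε : Fin 3 → Fin 2) (i : Fin 3) : E ε i = (ε i : ℕ) := rfl

lemma prod_X_pow_univ (d : Fin 3 →₀ ℕ) :
    (∏ i : Fin 3, (X i : RY) ^ d i) = monomial d 1 := by
  rw [← prod_X_pow_eq_monomial]
  exact (Finset.prod_subset (Finset.subset_univ _) (by
    intro i _ h
    simp [Finsupp.notMem_support_iff.mp h])).symm

lemma mon_eq (ε : Fin 3 → Fin 2) :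
    (∏ i, y i ^ (ε i : ℕ)) = algebraMap RY L (monomial (E ε) 1) := by
  rw [← prod_X_pow_univ (E ε), map_prod]
  simp [y]

lemma expand_two_monomial (d : Fin 3 →₀ ℕ) (a : ZMod 2) :
    expand 2 (monomial d a) = monomial (2 • d) a := by
  rw [expand_monomial]

lemma sq_eq_expand (f : RY) : f ^ 2 = expand 2 f := by
  induction f using MvPolynomial.induction_on with
  | C a =>
      rw [expand_C, ← map_pow]
      congr 1
      revert a; decide
  | add p q hp hq => rw [CharTwo.add_sq, map_add, hp, hq]
  | mul_X p i hp => rw [mul_pow, map_mul, hp, expand_X]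

lemma coeff_sq_two_smul (f : RY) (w : Fin 3 →₀ ℕ) : coeff (2 • w) (f ^ 2) = coeff w f := by
  rw [sq_eq_expand]
  induction f using MvPolynomial.induction_on' with
  | monomial d a =>
      rw [expand_two_monomial, coeff_monomial, coeff_monomial]
      congr 1
      simp only [eq_iff_iff]
      constructor
      · intro h
        ext i
        have := DFunLike.congr_fun h i
        simp only [Finsupp.smul_apply, smul_eq_mul] at this
        omega
      · rintro rfl; rfl
  | add p q hp hq => rw [map_add, coeff_add, coeff_add, hp, hq]

lemma coeff_sq_odd (f : RY) (v : Fin 3 →₀ ℕ) (i : Fin 3) (h : Odd (v i)) :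
    coeff v (f ^ 2) = 0 := by
  rw [sq_eq_expand]
  induction f using MvPolynomial.induction_on' with
  | monomial d a =>
      rw [expand_two_monomial, coeff_monomial, if_neg]
      intro hdv
      rw [← hdv] at h
      rw [Finsupp.smul_apply, smul_eq_mul, Nat.odd_iff] at h
      omega
  | add p q hp hq => rw [map_add, coeff_add, hp, hq, add_zero]

lemma key_poly (p : (Fin 3 → Fin 2) → RY)
    (h : ∑ ε : Fin 3 → Fin 2, (p ε) ^ 2 * monomial (E ε) 1 = 0) (ε : Fin 3 → Fin 2) :
    p ε = 0 := by
  apply MvPolynomial.ext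
  intro w
  rw [coeff_zero]
  have h2 := congrArg (coeff (2 • w + E ε)) h
  rw [MvPolynomial.coeff_sum, coeff_zero, Finset.sum_eq_single ε] at h2
  · rwa [coeff_mul_monomial, mul_one, coeff_sq_two_smul] at h2
  · intro δ _ hδ
    rw [coeff_mul_monomial']
    split_ifs with hle
    · rw [mul_one]
      obtain ⟨i, hi⟩ : ∃ i, δ i ≠ ε i := by
        by_contra hc
        push_neg at hc
        exact hδ (funext hc)
      apply coeff_sq_odd _ _ i
      have h1 : (δ i : ℕ) ≤ 2 * w i + (ε i : ℕ) := by
        have := hle i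
        simpa using this
      have h2 : ((2 • w + E ε - E δ) i) = 2 * w i + (ε i : ℕ) - (δ i : ℕ) := by
        simp [Finsupp.tsub_apply, two_mul]
      rw [h2, Nat.odd_iff]
      have hd2 : (δ i : ℕ) < 2 := (δ i).isLt
      have he2 : (ε i : ℕ) < 2 := (ε i).isLt
      have hne : (δ i : ℕ) ≠ (ε i : ℕ) := fun hc => hi (Fin.val_injective hc)
      omega
    · rfl
  · simp

lemma key_L (f : (Fin 3 → Fin 2) → L)
    (h : ∑ ε : Fin 3 → Fin 2, (f ε) ^ 2 * ∏ i, y i ^ (ε i : ℕ) = 0) (ε : Fin 3 → Fin 2) :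
    f ε = 0 := by
  obtain ⟨b, hb⟩ :=
    IsLocalization.exist_integer_multiples (nonZeroDivisors RY) Finset.univ f
  choose q hq using fun δ => hb δ (Finset.mem_univ δ)
  have hbL : algebraMap RY L (b : RY) ≠ 0 := by
    rw [map_ne_zero_iff _ (IsFractionRing.injective RY L)]
    exact nonZeroDivisors.coe_ne_zero b
  have hpoly : ∑ δ : Fin 3 → Fin 2, (q δ) ^ 2 * monomial (E δ) 1 = 0 := by
    apply IsFractionRing.injective RY L
    rw [map_sum, map_zero]
    have : ∀ δ : Fin 3 → Fin 2,
        algebraMap RY L ((q δ) ^ 2 * monomial (E δ) 1)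
          = (algebraMap RY L (b : RY)) ^ 2 * ((f δ) ^ 2 * ∏ i, y i ^ (δ i : ℕ)) := by
      intro δ
      rw [map_mul, map_pow, hq δ, Algebra.smul_def, ← mon_eq, mul_pow]
      ring
    rw [Finset.sum_congr rfl fun δ _ => this δ, ← Finset.mul_sum, h, mul_zero]
  have hq0 : q ε = 0 := key_poly q hpoly ε
  have : algebraMap RY L (b : RY) * f ε = 0 := by
    rw [← Algebra.smul_def, ← hq ε, hq0, map_zero]
  rcases mul_eq_zero.mp this with h' | h'
  · exact absurd h' hbL
  · exact h'

def Rtilde : Subalgebra (ZMod 2) L :=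
  Algebra.adjoin (ZMod 2)
    ({y 0, y 1, y 2} ∪ {(y 0 + y 1)⁻¹, (y 0 + y 2)⁻¹, (y 1 + y 2)⁻¹})

/-- `R'' = F₂[X1,X2,X3][(X1+X2)⁻¹,(X1+X3)⁻¹,(X2+X3)⁻¹]` with `X_i = Y_i²`. -/
def Rsq : Subalgebra (ZMod 2) L :=
  Algebra.adjoin (ZMod 2)
    ({y 0 ^ 2, y 1 ^ 2, y 2 ^ 2} ∪
      {(y 0 ^ 2 + y 1 ^ 2)⁻¹, (y 0 ^ 2 + y 2 ^ 2)⁻¹, (y 1 ^ 2 + y 2 ^ 2)⁻¹})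

lemma y_mem_Rtilde (i : Fin 3) : y i ∈ Rtilde := by
  apply Algebra.subset_adjoin
  fin_cases i
  · exact Set.mem_union_left _ (Set.mem_insert _ _)
  · exact Set.mem_union_left _ (Set.mem_insert_of_mem _ (Set.mem_insert _ _))
  · exact Set.mem_union_left _ (Set.mem_insert_of_mem _ (Set.mem_insert_of_mem _ rfl))

lemma ysq_mem_Rsq (i : Fin 3) : y i ^ 2 ∈ Rsq := by
  apply Algebra.subset_adjoin
  fin_cases i
  · exact Set.mem_union_left _ (Set.mem_insert _ _)
  · exact Set.mem_union_left _ (Set.mem_insert_of_mem _ (Set.mem_insert _ _))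
  · exact Set.mem_union_left _ (Set.mem_insert_of_mem _ (Set.mem_insert_of_mem _ rfl))

lemma Rsq_le_Rtilde : Rsq ≤ Rtilde := by
  apply Algebra.adjoin_le
  rintro x (hx | hx)
  · simp only [Set.mem_insert_iff, Set.mem_singleton_iff] at hx
    rcases hx with rfl | rfl | rfl <;> exact pow_mem (y_mem_Rtilde _) 2
  · simp only [Set.mem_insert_iff, Set.mem_singleton_iff] at hx
    rcases hx with rfl | rfl | rfl <;>
    · rw [← CharTwo.add_sq, ← inv_pow]
      refine pow_mem (Algebra.subset_adjoin ?_) 2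
      · apply Set.mem_union_right
        simp [Set.mem_insert_iff]

lemma Rsq_sq {z : L} (hz : z ∈ Rsq) : ∃ w : L, z = w ^ 2 := by
  induction hz using Algebra.adjoin_induction with
  | mem x hx =>
      rcases hx with hx | hx <;>
        simp only [Set.mem_insert_iff, Set.mem_singleton_iff] at hx
      · rcases hx with rfl | rfl | rfl
        exacts [⟨y 0, rfl⟩, ⟨y 1, rfl⟩, ⟨y 2, rfl⟩]
      · rcases hx with rfl | rfl | rfl <;>
          exact ⟨_, by rw [← CharTwo.add_sq, ← inv_pow]⟩
  | algebraMap r =>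
      refine ⟨algebraMap (ZMod 2) L r, ?_⟩
      rw [← map_pow]
      congr 1
      revert r; decide
  | add x z hx hz hx' hz' =>
      obtain ⟨w1, rfl⟩ := hx'
      obtain ⟨w2, rfl⟩ := hz'
      exact ⟨w1 + w2, (CharTwo.add_sq w1 w2).symm⟩
  | mul x z hx hz hx' hz' =>
      obtain ⟨w1, rfl⟩ := hx'
      obtain ⟨w2, rfl⟩ := hz'
      exact ⟨w1 * w2, (mul_pow w1 w2 2).symm⟩

def Mspan : Submodule Rsq L :=
  Submodule.span Rsq (Set.range fun ε : Fin 3 → Fin 2 => ∏ i, y i ^ (ε i : ℕ))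

lemma mon_mem_Mspan (ε : Fin 3 → Fin 2) : (∏ i, y i ^ (ε i : ℕ)) ∈ Mspan :=
  Submodule.subset_span ⟨ε, rfl⟩

lemma one_mem_Mspan : (1 : L) ∈ Mspan := by
  have : (∏ i, y i ^ (((0 : Fin 3 → Fin 2)) i : ℕ)) = 1 := by simp
  simpa [this] using mon_mem_Mspan 0

lemma y_mem_Mspan (i : Fin 3) : y i ∈ Mspan := by
  have : (∏ j, y j ^ (((fun j => if j = i then (1 : Fin 2) else 0) : Fin 3 → Fin 2) j : ℕ))
      = y i := by
    rw [Finset.prod_eq_single i (fun j _ hj => by simp [hj]) (by simp)]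
    simp
  simpa [this] using mon_mem_Mspan (fun j => if j = i then 1 else 0)

lemma mon_mul_mon (ε δ : Fin 3 → Fin 2) :
    (∏ i, y i ^ (ε i : ℕ)) * (∏ i, y i ^ (δ i : ℕ)) ∈ Mspan := by
  have hmin : ∀ a b : Fin 2, (a : ℕ) + (b : ℕ) = 2 * min (a : ℕ) (b : ℕ) + ((a + b : Fin 2) : ℕ) :=
    by decide
  have hs : (∏ i, (y i ^ 2) ^ min (ε i : ℕ) (δ i : ℕ)) ∈ Rsq :=
    prod_mem fun i _ => pow_mem (ysq_mem_Rsq i) _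
  have key : (∏ i, y i ^ (ε i : ℕ)) * (∏ i, y i ^ (δ i : ℕ))
      = (⟨_, hs⟩ : Rsq) • ∏ i, y i ^ (((ε + δ) i : Fin 2) : ℕ) := by
    rw [Subalgebra.smul_def, smul_eq_mul, ← Finset.prod_mul_distrib, ← Finset.prod_mul_distrib]
    refine Finset.prod_congr rfl fun i _ => ?_
    rw [← pow_mul, ← pow_add, ← pow_add, Pi.add_apply]
    rw [hmin (ε i) (δ i)]
  rw [key]
  exact Mspan.smul_mem _ (mon_mem_Mspan (ε + δ))

lemma Mspan_mul {a b : L} (ha : a ∈ Mspan) (hb : b ∈ Mspan) : a * b ∈ Mspan := by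
  have h : Mspan * Mspan ≤ Mspan := by
    rw [Mspan, Submodule.span_mul_span]
    apply Submodule.span_le.mpr
    rintro x ⟨u, ⟨ε, rfl⟩, v, ⟨δ, rfl⟩, rfl⟩
    exact mon_mul_mon ε δ
  exact h (Submodule.mul_mem_mul ha hb)

lemma inv_mem_Mspan {i j : Fin 3} (hij : i ≠ j) (hc : (y i ^ 2 + y j ^ 2)⁻¹ ∈ Rsq) :
    (y i + y j)⁻¹ ∈ Mspan := by
  have hne : y i + y j ≠ 0 := y_add_ne hij
  have key : (y i + y j)⁻¹
      = (⟨_, hc⟩ : Rsq) • y i + (⟨_, hc⟩ : Rsq) • y j := by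
    have hcoe : ((⟨(y i ^ 2 + y j ^ 2)⁻¹, hc⟩ : Rsq) : L) = (y i ^ 2 + y j ^ 2)⁻¹ := rfl
    rw [Subalgebra.smul_def, Subalgebra.smul_def, smul_eq_mul, smul_eq_mul, hcoe, ← mul_add]
    rw [← CharTwo.add_sq, sq, mul_inv, mul_assoc, inv_mul_cancel₀ hne, mul_one]
  rw [key]
  exact Mspan.add_mem (Mspan.smul_mem _ (y_mem_Mspan i)) (Mspan.smul_mem _ (y_mem_Mspan j))

def T : Subalgebra (ZMod 2) L where
  carrier := Mspan
  add_mem' ha hb := Mspan.add_mem ha hb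
  mul_mem' := Mspan_mul
  one_mem' := one_mem_Mspan
  zero_mem' := Mspan.zero_mem
  algebraMap_mem' r := by
    fin_cases r
    · show algebraMap (ZMod 2) L 0 ∈ Mspan; simpa using Mspan.zero_mem
    · show algebraMap (ZMod 2) L 1 ∈ Mspan; simpa using one_mem_Mspan


lemma Rtilde_le_T : Rtilde ≤ T := by
  apply Algebra.adjoin_le
  rintro x (hx | hx) <;>
    simp only [Set.mem_insert_iff, Set.mem_singleton_iff] at hx
  · rcases hx with rfl | rfl | rfl <;> exact y_mem_Mspan _
  · rcases hx with rfl | rfl | rfl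
    · exact inv_mem_Mspan (by decide)
        (Algebra.subset_adjoin (Set.mem_union_right _ (Set.mem_insert _ _)))
    · exact inv_mem_Mspan (by decide)
        (Algebra.subset_adjoin (Set.mem_union_right _ (Set.mem_insert_of_mem _ (Set.mem_insert _ _))))
    · exact inv_mem_Mspan (by decide)
        (Algebra.subset_adjoin (Set.mem_union_right _ (Set.mem_insert_of_mem _ (Set.mem_insert_of_mem _ rfl))))

/-- `R̃''` is a free `R''`-module of rank `8` with basis
`{Y1^{ε1} Y2^{ε2} Y3^{ε3} : ε_i ∈ {0,1}}`: one has `R'' ⊆ R̃''`, the eight monomials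
lie in `R̃''`, and every element of `R̃''` is uniquely an `R''`-linear combination
of them. -/
theorem stmt13 :
    Rsq ≤ Rtilde ∧
    (∀ ε : Fin 3 → Fin 2, (∏ i, y i ^ (ε i : ℕ)) ∈ Rtilde) ∧
    ∀ z ∈ Rtilde, ∃! c : (Fin 3 → Fin 2) → Rsq,
      z = ∑ ε : Fin 3 → Fin 2, (c ε : L) * ∏ i, y i ^ (ε i : ℕ) := by
  refine ⟨Rsq_le_Rtilde, fun ε => prod_mem fun i _ => pow_mem (y_mem_Rtilde i) _, ?_⟩
  intro z hz
  have hzM : z ∈ Mspan := Rtilde_le_T hz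
  obtain ⟨c, hc⟩ := (Submodule.mem_span_range_iff_exists_fun Rsq).mp hzM
  have hceq : z = ∑ ε : Fin 3 → Fin 2, (c ε : L) * ∏ i, y i ^ (ε i : ℕ) := by
    rw [← hc]
    exact Finset.sum_congr rfl fun ε _ => by
      rw [Subalgebra.smul_def, smul_eq_mul]
  refine ⟨c, hceq, ?_⟩
  intro c' hc'
  choose w1 hw1 using fun ε => Rsq_sq (c' ε).2
  choose w2 hw2 using fun ε => Rsq_sq (c ε).2
  have hsum : ∑ ε : Fin 3 → Fin 2, (w1 ε - w2 ε) ^ 2 * ∏ i, y i ^ (ε i : ℕ) = 0 := by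
    have hterm : ∀ ε ∈ Finset.univ, (w1 ε - w2 ε) ^ 2 * ∏ i, y i ^ (ε i : ℕ)
        = (c' ε : L) * (∏ i, y i ^ (ε i : ℕ)) + (c ε : L) * ∏ i, y i ^ (ε i : ℕ) := by
      intro ε _
      rw [CharTwo.sub_eq_add, CharTwo.add_sq, ← hw1, ← hw2, add_mul]
    rw [Finset.sum_congr rfl hterm, Finset.sum_add_distrib, ← hc', ← hceq]
    exact CharTwo.add_self_eq_zero z
  funext ε
  have h0 : w1 ε - w2 ε = 0 := key_L _ hsum ε
  have : w1 ε = w2 ε := sub_eq_zero.mp h0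
  exact Subtype.ext (by rw [hw1, hw2, this])
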